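/- A camera arrangement 𝒞 = (C_1,…,C_m) with pairwise distinct centers has the property that no three camera centers are collinear if and only if there exists h ∈ PGL_4 × PGL_3^m such that the arrangement h·𝒞 is (equal to) a center-generic translational arrangement. -/

import Mathlib

open MvPolynomial

noncomputable section

abbrev Vec3 := Fin 3 → ℂ
abbrev Vec4 := Fin 4 → ℂ
abbrev Camera := Matrix (Fin 3) (Fin 4) ℂ

/-- The polynomial ring `R = ℂ[ℓ_{i,j} : 1 ≤ i ≤ 3, 1 ≤ j ≤ m]`. -/
abbrev LineRing (m : ℕ) := MvPolynomial (Fin 3 × Fin m) ℂ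

/-- `c` is (a representative of) the center of the camera `C`. -/
def IsCenter (C : Camera) (c : Vec4) : Prop := c ≠ 0 ∧ C.mulVec c = 0

/-- A camera arrangement: `m ≥ 2` cameras of rank 3 with pairwise distinct centers. -/
def IsCameraArrangement {m : ℕ} (𝒞 : Fin m → Camera) : Prop :=
  2 ≤ m ∧ (∀ i, (𝒞 i).rank = 3) ∧
    ∀ i j : Fin m, i ≠ j → ¬ ∃ c : Vec4, IsCenter (𝒞 i) c ∧ IsCenter (𝒞 j) c

/-- The cameras indexed by `S` have collinear centers: all of their centers lie on a
common projective line in ℙ³, i.e. in a common linear subspace of dimension ≤ 2 of ℂ⁴. -/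
def CollinearCenters {m : ℕ} (𝒞 : Fin m → Camera) (S : Set (Fin m)) : Prop :=
  ∃ W : Submodule ℂ Vec4, Module.finrank ℂ W ≤ 2 ∧
    ∀ i ∈ S, ∃ c : Vec4, IsCenter (𝒞 i) c ∧ c ∈ W

/-- No four camera centers are collinear. -/
def NoFourCollinear {m : ℕ} (𝒞 : Fin m → Camera) : Prop :=
  ∀ S : Finset (Fin m), S.card = 4 → ¬ CollinearCenters 𝒞 ↑S

/-- The translational camera `[I₃ | s]`. -/
def transCam (s : Vec3) : Camera :=
  Matrix.of fun (i : Fin 3) (r : Fin 4) =>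
    if (r : ℕ) = (i : ℕ) then 1 else if (r : ℕ) = 3 then s i else 0

/-- The 4×m matrix of camera centers of the translational arrangement `𝒞(s)`,
whose `j`-th column is `(s_{1,j}, s_{2,j}, s_{3,j}, −1)ᵀ`. -/
def centersMatrix {m : ℕ} (s : Fin m → Vec3) : Matrix (Fin 4) (Fin m) ℂ :=
  Matrix.of fun r j => if h : (r : ℕ) < 3 then s j ⟨r, h⟩ else -1

/-- The translational arrangement `𝒞(s)` is center-generic:
(i) `s_{i₁,j₁} − s_{i₂,j₂} ≠ 0` for all `i₁ < i₂` and all `j₁, j₂`;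
(ii) all 3×3 minors of the matrix of camera centers are nonzero. -/
def CenterGeneric {m : ℕ} (s : Fin m → Vec3) : Prop :=
  (∀ i1 i2 : Fin 3, i1 < i2 → ∀ j1 j2 : Fin m, s j1 i1 - s j2 i2 ≠ 0) ∧
  ∀ (ri : Fin 3 → Fin 4) (ci : Fin 3 → Fin m),
    Function.Injective ri → Function.Injective ci →
      ((centersMatrix s).submatrix ri ci).det ≠ 0

/- ### Auxiliary material -/

section Aux

open Matrix Module Function

/-- the kernel vector `(s, -1)` of the translational camera `[I₃ | s]`. -/
def kerVec (s : Vec3) : Vec4 := fun r => if h : (r : ℕ) < 3 then s ⟨r, h⟩ else -1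

lemma transCam_mulVec (s : Vec3) (v : Vec4) (i : Fin 3) :
    (transCam s).mulVec v i = v i.castSucc + s i * v 3 := by
  have h3 : ((3 : Fin 4) : ℕ) = 3 := rfl
  fin_cases i <;>
    simp [transCam, Matrix.mulVec, dotProduct, Fin.sum_univ_four, h3,
      Fin.castSucc] <;> rfl

lemma kerVec_ne_zero (s : Vec3) : kerVec s ≠ 0 := by
  intro h
  have := congrFun h 3
  have h3 : ((3 : Fin 4) : ℕ) = 3 := rfl
  simp [kerVec, h3] at this

lemma kerVec_castSucc (s : Vec3) (i : Fin 3) : kerVec s i.castSucc = s i := by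
  have h : ((i.castSucc : Fin 4) : ℕ) < 3 := i.isLt
  simp only [kerVec, dif_pos h]
  congr 1

lemma kerVec_three (s : Vec3) : kerVec s 3 = -1 := rfl

lemma ker_transCam (s : Vec3) :
    LinearMap.ker (transCam s).mulVecLin = Submodule.span ℂ {kerVec s} := by
  ext v
  rw [LinearMap.mem_ker, Submodule.mem_span_singleton]
  constructor
  · intro hv
    refine ⟨-(v 3), ?_⟩
    funext r
    by_cases hr : (r : ℕ) < 3
    · have hcs : (⟨(r : ℕ), hr⟩ : Fin 3).castSucc = r := by
        apply Fin.ext; rfl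
      have h0 : v r + s ⟨(r : ℕ), hr⟩ * v 3 = 0 := by
        have h := congrFun hv (⟨(r : ℕ), hr⟩ : Fin 3)
        rw [Matrix.mulVecLin_apply, transCam_mulVec, hcs] at h
        simpa using h
      have hkv : kerVec s r = s ⟨(r : ℕ), hr⟩ := by
        conv_lhs => rw [← hcs]
        rw [kerVec_castSucc]
      simp only [Pi.smul_apply, hkv, smul_eq_mul]
      linear_combination -h0
    · have hr3 : r = 3 := by
        apply Fin.ext
        have := r.isLt
        omega
      subst hr3
      simp [kerVec_three]
  · rintro ⟨a, rfl⟩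
    funext i
    rw [Matrix.mulVecLin_apply, transCam_mulVec]
    simp [kerVec_castSucc, kerVec_three]
    ring

lemma transCam_surjective (s : Vec3) :
    Function.Surjective (transCam s).mulVecLin := by
  intro y
  refine ⟨fun r => if h : (r : ℕ) < 3 then y ⟨r, h⟩ else 0, ?_⟩
  funext i
  rw [Matrix.mulVecLin_apply, transCam_mulVec]
  have h3 : ((3 : Fin 4) : ℕ) = 3 := rfl
  simp [Fin.is_lt, h3]

/-- prescribing a linear map (as matrix) on a linearly independent family. -/
lemma exists_matrix_mulVec_eq {k n : ℕ} (v : Fin k → Vec4)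
    (hv : LinearIndependent ℂ v) (w : Fin k → (Fin n → ℂ)) :
    ∃ H : Matrix (Fin n) (Fin 4) ℂ, ∀ t, H.mulVec (v t) = w t := by
  set φ : (Fin k → ℂ) →ₗ[ℂ] Vec4 := Fintype.linearCombination ℂ v with hφ
  have hker : LinearMap.ker φ = ⊥ := by
    rw [LinearMap.ker_eq_bot']
    intro u hu
    have := Fintype.linearIndependent_iff.mp hv u (by
      rw [hφ] at hu
      simpa [Fintype.linearCombination_apply] using hu)
    funext i; exact this i
  obtain ⟨ψ, hψ⟩ := φ.exists_leftInverse_of_injective hker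
  set Wlin : (Fin k → ℂ) →ₗ[ℂ] (Fin n → ℂ) := Fintype.linearCombination ℂ w with hW
  refine ⟨LinearMap.toMatrix' (Wlin.comp ψ), fun t => ?_⟩
  have h1 : Matrix.mulVec (LinearMap.toMatrix' (Wlin.comp ψ)) (v t)
      = (Wlin.comp ψ) (v t) := by
    have := Matrix.toLin'_toMatrix' (Wlin.comp ψ)
    calc Matrix.mulVec (LinearMap.toMatrix' (Wlin.comp ψ)) (v t)
        = Matrix.toLin' (LinearMap.toMatrix' (Wlin.comp ψ)) (v t) := rfl
      _ = (Wlin.comp ψ) (v t) := by rw [this]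
  rw [h1]
  have h2 : v t = φ (Pi.single t 1) := by
    rw [hφ, Fintype.linearCombination_apply_single, one_smul]
  rw [LinearMap.comp_apply, h2]
  have h3 : ψ (φ (Pi.single t 1)) = Pi.single t 1 := by
    have := congrFun (congrArg DFunLike.coe hψ) (Pi.single t 1)
    simpa using this
  rw [h3, hW, Fintype.linearCombination_apply_single, one_smul]

/-- kernel of a rank-3 camera is spanned by a single nonzero vector. -/
lemma rank3_ker (C : Camera) (h : C.rank = 3) :
    ∃ c : Vec4, c ≠ 0 ∧ LinearMap.ker C.mulVecLin = Submodule.span ℂ {c} := by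
  have hrn := LinearMap.finrank_range_add_finrank_ker C.mulVecLin
  have h4 : Module.finrank ℂ Vec4 = 4 := by
    simp [Module.finrank_fintype_fun_eq_card]
  have hrank : Module.finrank ℂ (LinearMap.range C.mulVecLin) = 3 := h
  have hker : Module.finrank ℂ (LinearMap.ker C.mulVecLin) = 1 := by
    rw [hrank, h4] at hrn
    omega
  have hne : LinearMap.ker C.mulVecLin ≠ ⊥ := by
    intro hbot
    rw [hbot] at hker
    simp at hker
  obtain ⟨c, hc, hc0⟩ := Submodule.exists_mem_ne_zero_of_ne_bot hne
  refine ⟨c, hc0, ?_⟩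
  refine (Submodule.eq_of_le_of_finrank_le ?_ ?_).symm
  · rw [Submodule.span_le, Set.singleton_subset_iff]; exact hc
  · rw [hker, finrank_span_singleton hc0]

lemma rank3_surjective (C : Camera) (h : C.rank = 3) :
    Function.Surjective C.mulVecLin := by
  rw [← LinearMap.range_eq_top]
  apply Submodule.eq_top_of_finrank_eq
  have h3 : Module.finrank ℂ Vec3 = 3 := by
    simp [Module.finrank_fintype_fun_eq_card]
  rw [h3]; exact h

/-- factoring one surjective map through another with the same kernel. -/
lemma exists_comp_eq (f g : Vec4 →ₗ[ℂ] Vec3) (hf : Function.Surjective f)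
    (hker : LinearMap.ker f ≤ LinearMap.ker g) :
    ∃ G : Vec3 →ₗ[ℂ] Vec3, G.comp f = g := by
  obtain ⟨σ, hσ⟩ := f.exists_rightInverse_of_surjective (LinearMap.range_eq_top.2 hf)
  refine ⟨g.comp σ, ?_⟩
  refine LinearMap.ext fun x => ?_
  have h1 : f (σ (f x) - x) = 0 := by
    have := congrFun (congrArg DFunLike.coe hσ) (f x)
    simp only [LinearMap.comp_apply, LinearMap.id_apply] at this
    simp [this]
  have h2 : g (σ (f x) - x) = 0 := hker h1
  have := sub_eq_zero.mp (by simpa using h2)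
  simpa using this

/-- Genericity: existence of a matrix `H` realizing all needed open conditions. -/
lemma exists_good_H {m : ℕ} (c : Fin m → Vec4) (hc0 : ∀ j, c j ≠ 0)
    (hpair : ∀ j1 j2 : Fin m, j1 ≠ j2 → LinearIndependent ℂ ![c j1, c j2])
    (htriple : ∀ ci : Fin 3 → Fin m, Function.Injective ci →
      LinearIndependent ℂ (fun t => c (ci t))) :
    ∃ H : Matrix (Fin 4) (Fin 4) ℂ, IsUnit H.det ∧
      (∀ j, H.mulVec (c j) 3 ≠ 0) ∧
      (∀ i1 i2 : Fin 3, i1 < i2 → ∀ j1 j2 : Fin m,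
        H.mulVec (c j2) i2.castSucc * H.mulVec (c j1) 3
          - H.mulVec (c j1) i1.castSucc * H.mulVec (c j2) 3 ≠ 0) ∧
      (∀ (ri : Fin 3 → Fin 4) (ci : Fin 3 → Fin m),
        Function.Injective ri → Function.Injective ci →
        (Matrix.of fun a b : Fin 3 => H.mulVec (c (ci b)) (ri a)).det ≠ 0) := by
  classical
  let Xm : Matrix (Fin 4) (Fin 4) (MvPolynomial (Fin 4 × Fin 4) ℂ) :=
    Matrix.of fun r c' => MvPolynomial.X (r, c')
  let D : Fin m → Fin 4 → MvPolynomial (Fin 4 × Fin 4) ℂ :=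
    fun j => Xm.mulVec fun p => MvPolynomial.C (c j p)
  have evD : ∀ (H : Matrix (Fin 4) (Fin 4) ℂ) (j : Fin m) (r : Fin 4),
      eval (fun q : Fin 4 × Fin 4 => H q.1 q.2) (D j r) = H.mulVec (c j) r := by
    intro H j r
    simp [D, Xm, Matrix.mulVec, dotProduct]
  have evXm : ∀ H : Matrix (Fin 4) (Fin 4) ℂ,
      Xm.map (eval fun q : Fin 4 × Fin 4 => H q.1 q.2) = H := by
    intro H; ext r c'; simp [Xm]
  have evdet : ∀ H : Matrix (Fin 4) (Fin 4) ℂ,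
      eval (fun q : Fin 4 × Fin 4 => H q.1 q.2) Xm.det = H.det := by
    intro H
    rw [RingHom.map_det, RingHom.mapMatrix_apply, evXm]
  have evQdet : ∀ (H : Matrix (Fin 4) (Fin 4) ℂ) (ri : Fin 3 → Fin 4) (ci : Fin 3 → Fin m),
      eval (fun q : Fin 4 × Fin 4 => H q.1 q.2)
        (Matrix.of fun a b : Fin 3 => D (ci b) (ri a)).det
      = (Matrix.of fun a b : Fin 3 => H.mulVec (c (ci b)) (ri a)).det := by
    intro H ri ci
    rw [RingHom.map_det, RingHom.mapMatrix_apply]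
    congr 1
    ext a b
    simp only [Matrix.map_apply, Matrix.of_apply]
    exact evD H (ci b) (ri a)
  have key : ∀ p : MvPolynomial (Fin 4 × Fin 4) ℂ,
      (∃ H : Matrix (Fin 4) (Fin 4) ℂ,
        eval (fun q : Fin 4 × Fin 4 => H q.1 q.2) p ≠ 0) → p ≠ 0 := by
    rintro p ⟨H, hH⟩ rfl
    simp at hH
  have cast3 : ∀ i : Fin 3, i.castSucc ≠ (3 : Fin 4) := by
    intro i hi
    have := congrArg Fin.val hi
    simp at this
    omega
  -- the four generic polynomials
  let Q : Fin 3 → Fin 3 → Fin m → Fin m → MvPolynomial (Fin 4 × Fin 4) ℂ :=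
    fun i1 i2 j1 j2 => D j2 i2.castSucc * D j1 3 - D j1 i1.castSucc * D j2 3
  let P1 : MvPolynomial (Fin 4 × Fin 4) ℂ := ∏ j, D j 3
  let P2 : MvPolynomial (Fin 4 × Fin 4) ℂ := ∏ q : Fin 3 × Fin 3 × Fin m × Fin m,
    if q.1 < q.2.1 then Q q.1 q.2.1 q.2.2.1 q.2.2.2 else 1
  let P3 : MvPolynomial (Fin 4 × Fin 4) ℂ := ∏ q : (Fin 3 → Fin 4) × (Fin 3 → Fin m),
    if Function.Injective q.1 ∧ Function.Injective q.2 then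
      (Matrix.of fun a b : Fin 3 => D (q.2 b) (q.1 a)).det else 1
  have hP1 : P1 ≠ 0 := by
    rw [Finset.prod_ne_zero_iff]
    intro j _
    apply key
    obtain ⟨H, hH⟩ := exists_matrix_mulVec_eq (fun _ : Fin 1 => c j)
      (linearIndependent_unique_iff.mpr (hc0 j)) (fun _ => Pi.single (3 : Fin 4) 1)
    refine ⟨H, ?_⟩
    rw [evD, hH 0]
    simp
  have hP2 : P2 ≠ 0 := by
    rw [Finset.prod_ne_zero_iff]
    rintro ⟨i1, i2, j1, j2⟩ -
    by_cases hlt : i1 < i2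
    · rw [if_pos hlt]
      apply key
      have hii : i1.castSucc ≠ i2.castSucc := by
        intro hh
        exact absurd (Fin.castSucc_injective _ hh) (ne_of_lt hlt)
      by_cases hj : j1 = j2
      · subst hj
        obtain ⟨H, hH⟩ := exists_matrix_mulVec_eq (fun _ : Fin 1 => c j1)
          (linearIndependent_unique_iff.mpr (hc0 j1))
          (fun _ => Pi.single (3 : Fin 4) 1 + Pi.single i2.castSucc 1)
        refine ⟨H, ?_⟩
        simp only [Q, _root_.map_sub, _root_.map_mul, evD, hH 0]
        simp [Pi.single_apply, cast3 i2, (cast3 i2).symm, hii, (cast3 i1)]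
      · obtain ⟨H, hH⟩ := exists_matrix_mulVec_eq ![c j1, c j2] (hpair j1 j2 hj)
          ![Pi.single (3 : Fin 4) 1, Pi.single i2.castSucc 1]
        refine ⟨H, ?_⟩
        have h1 := hH 0
        have h2 := hH 1
        simp only [Matrix.cons_val_zero, Matrix.cons_val_one, Matrix.head_cons] at h1 h2
        simp only [Q, _root_.map_sub, _root_.map_mul, evD, h1, h2]
        simp [Pi.single_apply, cast3 i2, (cast3 i2).symm, (cast3 i1).symm]
    · rw [if_neg hlt]; exact one_ne_zero
  have hP3 : P3 ≠ 0 := by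
    rw [Finset.prod_ne_zero_iff]
    rintro ⟨ri, ci⟩ -
    by_cases hinj : Function.Injective ri ∧ Function.Injective ci
    · rw [if_pos hinj]
      apply key
      obtain ⟨H, hH⟩ := exists_matrix_mulVec_eq (fun t => c (ci t))
        (htriple ci hinj.2) (fun t => Pi.single (ri t) 1)
      refine ⟨H, ?_⟩
      rw [evQdet]
      have : (Matrix.of fun a b : Fin 3 => H.mulVec (c (ci b)) (ri a))
          = (1 : Matrix (Fin 3) (Fin 3) ℂ) := by
        ext a b
        rw [Matrix.of_apply, hH b]
        by_cases hab : a = b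
        · subst hab; simp [Matrix.one_apply]
        · have : ri a ≠ ri b := fun hh => hab (hinj.1 hh)
          simp [Matrix.one_apply, Pi.single_apply, this.symm, hab]
      rw [this, Matrix.det_one]
      exact one_ne_zero
    · rw [if_neg hinj]; exact one_ne_zero
  have hP0 : Xm.det ≠ 0 := by
    apply key
    exact ⟨1, by rw [evdet]; simp⟩
  have hP : Xm.det * P1 * P2 * P3 ≠ 0 :=
    mul_ne_zero (mul_ne_zero (mul_ne_zero hP0 hP1) hP2) hP3
  -- find a point where the product does not vanish
  have hex : ∃ x : Fin 4 × Fin 4 → ℂ, eval x (Xm.det * P1 * P2 * P3) ≠ 0 := by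
    by_contra hcon
    push_neg at hcon
    exact hP (MvPolynomial.funext fun x => by rw [hcon x, map_zero])
  obtain ⟨x, hx⟩ := hex
  set H : Matrix (Fin 4) (Fin 4) ℂ := Matrix.of fun r c' => x (r, c') with hHdef
  have hxH : (fun q : Fin 4 × Fin 4 => H q.1 q.2) = x := by
    funext q
    cases q
    rfl
  rw [← hxH] at hx
  simp only [_root_.map_mul] at hx
  have hdet : H.det ≠ 0 := by
    intro hh; rw [evdet, hh] at hx; simp at hx
  have hx1 : eval (fun q : Fin 4 × Fin 4 => H q.1 q.2) P1 ≠ 0 := by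
    intro hh; rw [hh] at hx; simp at hx
  have hx2 : eval (fun q : Fin 4 × Fin 4 => H q.1 q.2) P2 ≠ 0 := by
    intro hh; rw [hh] at hx; simp at hx
  have hx3 : eval (fun q : Fin 4 × Fin 4 => H q.1 q.2) P3 ≠ 0 := by
    intro hh; rw [hh] at hx; simp at hx
  rw [map_prod] at hx1 hx2 hx3
  rw [Finset.prod_ne_zero_iff] at hx1 hx2 hx3
  refine ⟨H, isUnit_iff_ne_zero.mpr hdet, ?_, ?_, ?_⟩
  · intro j
    have := hx1 j (Finset.mem_univ j)
    rwa [evD] at this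
  · intro i1 i2 hlt j1 j2
    have := hx2 (i1, i2, j1, j2) (Finset.mem_univ _)
    rw [if_pos hlt] at this
    simp only [Q, _root_.map_sub, _root_.map_mul, evD] at this
    exact this
  · intro ri ci hri hci
    have := hx3 (ri, ci) (Finset.mem_univ _)
    rw [if_pos ⟨hri, hci⟩] at this
    rwa [evQdet] at this

end Aux

/-- **Proposition 4.2.** A camera arrangement has no three collinear camera centers if
and only if some element `h = (H, H₁, …, H_m) ∈ PGL₄ × PGL₃^m` transforms it into a
center-generic translational arrangement. -/
theorem noThreeCollinear_iff_equivalent_centerGeneric {m : ℕ} (𝒞 : Fin m → Camera)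
    (harr : IsCameraArrangement 𝒞) :
    (∀ S : Finset (Fin m), S.card = 3 → ¬ CollinearCenters 𝒞 ↑S) ↔
      ∃ (H : Matrix (Fin 4) (Fin 4) ℂ) (Hi : Fin m → Matrix (Fin 3) (Fin 3) ℂ),
        IsUnit H.det ∧ (∀ i, IsUnit (Hi i).det) ∧
        ∃ s : Fin m → Vec3, CenterGeneric s ∧
          ∀ i, Hi i * 𝒞 i * H⁻¹ = transCam (s i) := by
  classical
  constructor
  · -- forward direction
    intro hno3
    choose c hc0 hker using fun i => rank3_ker (𝒞 i) (harr.2.1 i)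
    have hcker : ∀ j, (𝒞 j).mulVec (c j) = 0 := by
      intro j
      have h1 : c j ∈ LinearMap.ker (𝒞 j).mulVecLin := by
        rw [hker j]; exact Submodule.mem_span_singleton_self _
      simpa [Matrix.mulVecLin_apply] using h1
    have hcenter : ∀ j, IsCenter (𝒞 j) (c j) := fun j => ⟨hc0 j, hcker j⟩
    have hpair : ∀ j1 j2 : Fin m, j1 ≠ j2 → LinearIndependent ℂ ![c j1, c j2] := by
      intro j1 j2 hne
      rw [linearIndependent_fin2]
      constructor
      · simpa using hc0 j2
      · intro a heq
        simp only [Matrix.cons_val_one, Matrix.head_cons, Matrix.cons_val_zero] at heq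
        apply harr.2.2 j1 j2 hne
        refine ⟨c j1, hcenter j1, hc0 j1, ?_⟩
        rw [← heq, Matrix.mulVec_smul, hcker j2, smul_zero]
    have htriple : ∀ ci : Fin 3 → Fin m, Function.Injective ci →
        LinearIndependent ℂ (fun t => c (ci t)) := by
      intro ci hci
      by_contra hdep
      apply hno3 (Finset.univ.image ci)
        (by rw [Finset.card_image_of_injective _ hci]; simp)
      refine ⟨Submodule.span ℂ (Set.range fun t => c (ci t)), ?_, ?_⟩
      · have hne3 : Fintype.card (Fin 3) ≠ (Set.range fun t => c (ci t)).finrank ℂ :=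
          fun hh => hdep (linearIndependent_iff_card_eq_finrank_span.mpr hh)
        have hne3' : Module.finrank ℂ (Submodule.span ℂ (Set.range fun t => c (ci t))) ≠ 3 := by
          intro hh
          apply hne3
          rw [Fintype.card_fin]
          exact hh.symm
        have hle' : Module.finrank ℂ (Submodule.span ℂ (Set.range fun t => c (ci t))) ≤ 3 := by
          have hle := finrank_range_le_card (R := ℂ) (fun t => c (ci t))
          rw [Fintype.card_fin] at hle
          exact hle
        omega
      · intro i hi
        simp only [Finset.coe_image, Finset.coe_univ, Set.image_univ, Set.mem_range] at hi
        obtain ⟨t, rfl⟩ := hi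
        exact ⟨c (ci t), hcenter (ci t),
          Submodule.subset_span (Set.mem_range_self t)⟩
    obtain ⟨H, hHdet, hd3, hQ, hminor⟩ := exists_good_H c hc0 hpair htriple
    set d : Fin m → Vec4 := fun j => H.mulVec (c j) with hd
    set s : Fin m → Vec3 := fun j i => -(d j i.castSucc) / (d j 3) with hs
    -- the key factorization of each camera
    have hHunit : IsUnit H := (Matrix.isUnit_iff_isUnit_det H).mpr hHdet
    have hHH : H * H⁻¹ = 1 := Matrix.mul_nonsing_inv H hHdet
    have hHH' : H⁻¹ * H = 1 := Matrix.nonsing_inv_mul H hHdet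
    have hdk : ∀ j, d j = (-(d j 3)) • kerVec (s j) := by
      intro j
      funext r
      by_cases hr : (r : ℕ) < 3
      · have hcs : (⟨(r : ℕ), hr⟩ : Fin 3).castSucc = r := by apply Fin.ext; rfl
        have hkv : kerVec (s j) r = s j ⟨(r : ℕ), hr⟩ := by
          conv_lhs => rw [← hcs]
          rw [kerVec_castSucc]
        rw [Pi.smul_apply, hkv, hs, smul_eq_mul]
        simp only [hcs]
        have hne := hd3 j
        field_simp
        exact (mul_div_cancel_right₀ _ hne).symm
      · have hr3 : r = 3 := by
          apply Fin.ext
          have := r.isLt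
          omega
        subst hr3
        rw [Pi.smul_apply, kerVec_three]
        simp
    have hspan : ∀ j, Submodule.span ℂ {d j} = Submodule.span ℂ {kerVec (s j)} := by
      intro j
      rw [hdk j]
      exact Submodule.span_singleton_smul_eq
        (isUnit_iff_ne_zero.mpr (neg_ne_zero.mpr (hd3 j))) _
    have hkerM : ∀ j, LinearMap.ker (𝒞 j * H⁻¹).mulVecLin
        = LinearMap.ker (transCam (s j)).mulVecLin := by
      intro j
      rw [ker_transCam, ← hspan j]
      ext v
      rw [LinearMap.mem_ker, Submodule.mem_span_singleton]
      constructor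
      · intro hv
        have hv' : (𝒞 j).mulVec (H⁻¹.mulVec v) = 0 := by
          rw [Matrix.mulVec_mulVec]
          simpa [Matrix.mulVecLin_apply] using hv
        have h2 : H⁻¹.mulVec v ∈ LinearMap.ker (𝒞 j).mulVecLin := by
          simpa [Matrix.mulVecLin_apply] using hv'
        rw [hker j, Submodule.mem_span_singleton] at h2
        obtain ⟨a, ha⟩ := h2
        refine ⟨a, ?_⟩
        have := congrArg (fun u => H.mulVec u) ha
        simp only [Matrix.mulVec_smul, Matrix.mulVec_mulVec, hHH,
          Matrix.one_mulVec] at this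
        rw [← this, hd]
      · rintro ⟨a, rfl⟩
        have h1 : (𝒞 j * H⁻¹).mulVec (H.mulVec (c j)) = 0 := by
          rw [Matrix.mulVec_mulVec, Matrix.mul_assoc, hHH', Matrix.mul_one, hcker j]
        have h1' : (𝒞 j * H⁻¹).mulVec (d j) = 0 := h1
        rw [Matrix.mulVecLin_apply, Matrix.mulVec_smul, h1', smul_zero]
    have hfsurj : ∀ j, Function.Surjective (𝒞 j * H⁻¹).mulVecLin := by
      intro j
      apply rank3_surjective
      rw [Matrix.rank_mul_eq_left_of_isUnit_det H⁻¹ (𝒞 j)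
        (Matrix.isUnit_nonsing_inv_det H hHdet)]
      exact harr.2.1 j
    have hGex : ∀ j, ∃ G : Vec3 →ₗ[ℂ] Vec3,
        G.comp (𝒞 j * H⁻¹).mulVecLin = (transCam (s j)).mulVecLin :=
      fun j => exists_comp_eq _ _ (hfsurj j) (le_of_eq (hkerM j))
    choose G hG using hGex
    have hGsurj : ∀ j, Function.Surjective (G j) := by
      intro j
      have : Function.Surjective ((G j).comp (𝒞 j * H⁻¹).mulVecLin) := by
        rw [hG j]; exact transCam_surjective (s j)
      exact Function.Surjective.of_comp this
    have hGbij : ∀ j, Function.Bijective (G j) := fun j =>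
      ⟨LinearMap.injective_iff_surjective.mpr (hGsurj j), hGsurj j⟩
    set Glin : ∀ j, Vec3 ≃ₗ[ℂ] Vec3 := fun j => LinearEquiv.ofBijective (G j) (hGbij j)
      with hGlin
    refine ⟨H, fun j => LinearMap.toMatrix' (G j), hHdet, ?_, s, ⟨?_, ?_⟩, ?_⟩
    · intro j
      apply Matrix.isUnit_det_of_right_inverse (B := LinearMap.toMatrix'
        ((Glin j).symm : Vec3 →ₗ[ℂ] Vec3))
      rw [← LinearMap.toMatrix'_comp]
      have hid : (G j).comp ((Glin j).symm : Vec3 →ₗ[ℂ] Vec3) = LinearMap.id := by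
        refine LinearMap.ext fun y => ?_
        have : G j (((Glin j).symm : Vec3 →ₗ[ℂ] Vec3) y) = (Glin j) ((Glin j).symm y) :=
          rfl
        rw [LinearMap.comp_apply, this, LinearEquiv.apply_symm_apply, LinearMap.id_apply]
      rw [hid, LinearMap.toMatrix'_id]
    · -- CenterGeneric (i)
      intro i1 i2 hlt j1 j2 heq
      apply hQ i1 i2 hlt j1 j2
      have heq' : s j1 i1 = s j2 i2 := sub_eq_zero.mp heq
      rw [hs] at heq'
      simp only at heq'
      rw [div_eq_div_iff (hd3 j1) (hd3 j2)] at heq'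
      linear_combination heq'
    · -- CenterGeneric (ii)
      intro ri ci hri hci
      have hfac : (centersMatrix s).submatrix ri ci
          = (Matrix.of fun a b : Fin 3 => d (ci b) (ri a))
            * Matrix.diagonal (fun b => -((d (ci b) 3)⁻¹)) := by
        ext a b
        rw [Matrix.mul_diagonal, Matrix.submatrix_apply]
        show centersMatrix s (ri a) (ci b) = d (ci b) (ri a) * -(d (ci b) 3)⁻¹
        by_cases h : ((ri a : ℕ) < 3)
        · have hcs : (⟨((ri a) : ℕ), h⟩ : Fin 3).castSucc = ri a := by apply Fin.ext; rfl
          rw [centersMatrix, Matrix.of_apply, dif_pos h, hs]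
          simp only [hcs]
          rw [mul_neg, ← div_eq_mul_inv, neg_div]
        · have hr3 : ri a = 3 := by
            apply Fin.ext
            have := (ri a).isLt
            omega
          rw [centersMatrix, Matrix.of_apply, dif_neg h, hr3]
          rw [mul_neg, mul_inv_cancel₀ (hd3 (ci b))]
      rw [hfac, Matrix.det_mul, Matrix.det_diagonal]
      refine mul_ne_zero (hminor ri ci hri hci) (Finset.prod_ne_zero_iff.mpr ?_)
      intro b _
      exact neg_ne_zero.mpr (inv_ne_zero (hd3 (ci b)))
    · -- the camera equations
      intro j
      have hinj : ∀ A B : Matrix (Fin 3) (Fin 4) ℂ, A.mulVecLin = B.mulVecLin → A = B := by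
        intro A B hAB
        have : Matrix.toLin' A = Matrix.toLin' B := hAB
        have := congrArg LinearMap.toMatrix' this
        rwa [LinearMap.toMatrix'_toLin', LinearMap.toMatrix'_toLin'] at this
      apply hinj
      rw [Matrix.mul_assoc, Matrix.mulVecLin_mul]
      have : (LinearMap.toMatrix' (G j)).mulVecLin = G j := by
        show Matrix.toLin' (LinearMap.toMatrix' (G j)) = G j
        rw [Matrix.toLin'_toMatrix']
      rw [this]
      exact hG j
  · -- backward direction
    rintro ⟨H, Hi, hHdet, hHidet, s, hgen, heqn⟩ S hS hcol
    obtain ⟨W, hW2, hWmem⟩ := hcol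
    set ci : Fin 3 → Fin m := fun t => ((S.orderIsoOfFin hS) t : Fin m) with hci
    have hciinj : Function.Injective ci := fun a b hab =>
      (S.orderIsoOfFin hS).injective (Subtype.ext hab)
    have hcimem : ∀ t, ci t ∈ S := fun t => ((S.orderIsoOfFin hS) t).2
    choose cc hcc hccW using fun t => hWmem (ci t) (hcimem t)
    have hHH' : H⁻¹ * H = 1 := Matrix.nonsing_inv_mul H hHdet
    have hkmem : ∀ t, H.mulVec (cc t) ∈
        LinearMap.ker (transCam (s (ci t))).mulVecLin := by
      intro t
      rw [LinearMap.mem_ker, Matrix.mulVecLin_apply, ← heqn (ci t), Matrix.mul_assoc,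
        ← Matrix.mulVec_mulVec, ← Matrix.mulVec_mulVec,
        Matrix.mulVec_mulVec (cc t) H⁻¹ H, hHH', Matrix.one_mulVec, (hcc t).2,
        Matrix.mulVec_zero]
    have hkne : ∀ t, H.mulVec (cc t) ≠ 0 := by
      intro t ht
      have hinj : Function.Injective H.mulVec :=
        Matrix.mulVec_injective_iff_isUnit.mpr ((Matrix.isUnit_iff_isUnit_det H).mpr hHdet)
      have : cc t = 0 := by
        apply hinj
        rw [ht, Matrix.mulVec_zero]
      exact (hcc t).1 this
    -- each kernel vector is a nonzero multiple of the corresponding centers column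
    have hkv : ∀ t, kerVec (s (ci t)) ∈ W.map H.mulVecLin := by
      intro t
      have h1 := hkmem t
      rw [ker_transCam, Submodule.mem_span_singleton] at h1
      obtain ⟨a, ha⟩ := h1
      have hane : a ≠ 0 := by
        rintro rfl
        rw [zero_smul] at ha
        exact hkne t ha.symm
      have : kerVec (s (ci t)) = a⁻¹ • H.mulVec (cc t) := by
        rw [← ha, smul_smul, inv_mul_cancel₀ hane, one_smul]
      rw [this]
      exact Submodule.smul_mem _ _ ⟨cc t, hccW t, rfl⟩
    -- but their matrix has a nonzero 3×3 minor, so they are linearly independent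
    have hdet := hgen.2 Fin.castSucc ci (Fin.castSucc_injective 3) hciinj
    have hindep : LinearIndependent ℂ (fun t => kerVec (s (ci t))) := by
      rw [Fintype.linearIndependent_iff]
      intro g hg
      have hmv : ((centersMatrix s).submatrix Fin.castSucc ci).mulVec g = 0 := by
        funext a
        have h := congrFun hg (Fin.castSucc a)
        simp only [Finset.sum_apply, Pi.smul_apply, smul_eq_mul, Pi.zero_apply] at h
        show (∑ t, centersMatrix s (Fin.castSucc a) (ci t) * g t) = 0
        rw [← h]
        apply Finset.sum_congr rfl
        intro t _
        rw [mul_comm]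
        rfl
      have := Matrix.eq_zero_of_mulVec_eq_zero hdet hmv
      exact fun t => congrFun this t
    -- three independent vectors in a ≤2-dimensional space: contradiction
    have hindep' : LinearIndependent ℂ
        (fun t => (⟨kerVec (s (ci t)), hkv t⟩ : W.map H.mulVecLin)) := by
      apply LinearIndependent.of_comp (W.map H.mulVecLin).subtype
      exact hindep
    have hcard := hindep'.fintype_card_le_finrank
    have hμ : Module.finrank ℂ (W.map H.mulVecLin) ≤ 2 :=
      le_trans (Submodule.finrank_map_le _ _) hW2
    simp only [Fintype.card_fin] at hcard
    omega

end
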